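/- Let u, v be nonzero vectors in R^d with angle θ between them, and let x be drawn uniformly from the unit sphere in R^d (d ≥ 2). Then the probability that sign(u·x) ≠ sign(v·x) equals θ/π. -/

import Mathlib

open MeasureTheory InnerProductGeometry

/-- `sgn t = 1` if `t > 0` and `0` otherwise. -/
noncomputable def sgn (t : ℝ) : ℝ := if 0 < t then 1 else 0

/-- The uniform probability measure on the unit sphere of `EuclideanSpace ℝ (Fin d)`. -/
noncomputable def uniformSphere (d : ℕ) :
    Measure (Metric.sphere (0 : EuclideanSpace ℝ (Fin d)) 1) :=
  ((volume : Measure (EuclideanSpace ℝ (Fin d))).toSphere Set.univ)⁻¹ •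
    (volume : Measure (EuclideanSpace ℝ (Fin d))).toSphere

section Aux

open Real Set Pointwise
open scoped ENNReal

lemma sgn_ne_iff {a b : ℝ} : sgn a ≠ sgn b ↔ ¬ ((0 < a) ↔ (0 < b)) := by
  unfold sgn
  by_cases ha : 0 < a <;> by_cases hb : 0 < b <;> simp [ha, hb]

lemma sgn_mul_pos {c : ℝ} (hc : 0 < c) (t : ℝ) : sgn (c * t) = sgn t := by
  unfold sgn
  have : 0 < c * t ↔ 0 < t := by
    constructor
    · intro h; nlinarith
    · intro h; positivity
  simp [this]

lemma measurable_sgn : Measurable sgn := by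
  unfold sgn
  exact Measurable.ite measurableSet_Ioi measurable_const measurable_const

open Real in
lemma cos_add_pos_iff {β φ : ℝ} (hβ : |β| < π/2) (hφ : -π < φ) (hφ' : φ < π) :
    0 < Real.cos (φ + β) ↔ -(π/2) - β < φ ∧ φ < π/2 - β := by
  have hβ1 : -(π/2) < β := (abs_lt.mp hβ).1
  have hβ2 : β < π/2 := (abs_lt.mp hβ).2
  constructor
  · intro h
    constructor
    · by_contra h1
      push_neg at h1
      have h2 : Real.cos (-(φ + β)) ≤ 0 :=
        Real.cos_nonpos_of_pi_div_two_le_of_le (by linarith) (by linarith)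
      rw [Real.cos_neg] at h2; linarith
    · by_contra h1
      push_neg at h1
      have h2 : Real.cos (φ + β) ≤ 0 :=
        Real.cos_nonpos_of_pi_div_two_le_of_le (by linarith) (by linarith)
      linarith
  · rintro ⟨h1, h2⟩
    exact Real.cos_pos_of_mem_Ioo ⟨by linarith, by linarith⟩


lemma area_polar (K : Set (ℝ × ℝ)) (hK : MeasurableSet K) (Φ : Set ℝ) (hΦ : MeasurableSet Φ)
    (h : ∀ ρ φ : ℝ, 0 < ρ → φ ∈ Set.Ioo (-π) π →
      ((ρ * Real.cos φ, ρ * Real.sin φ) ∈ K ↔ φ ∈ Φ)) :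
    volume (K ∩ {p : ℝ × ℝ | p.1^2 + p.2^2 < 1})
      = ENNReal.ofReal ((volume (Φ ∩ Set.Ioo (-π) π)).toReal / 2) := by
  set D := K ∩ {p : ℝ × ℝ | p.1^2 + p.2^2 < 1} with hDdef
  have hdisk : MeasurableSet {p : ℝ × ℝ | p.1^2 + p.2^2 < 1} := by
    have hc : Continuous fun p : ℝ × ℝ => p.1^2 + p.2^2 := by fun_prop
    exact measurableSet_lt hc.measurable measurable_const
  have hD : MeasurableSet D := hK.inter hdisk
  have hsub : D ⊆ Metric.ball (0 : ℝ × ℝ) 1 := by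
    rintro ⟨a, b⟩ ⟨-, hp⟩
    simp only [Set.mem_setOf_eq] at hp
    rw [Metric.mem_ball, dist_zero_right, Prod.norm_def]
    have ha : |a| < 1 := by
      rw [← sq_lt_one_iff_abs_lt_one]; nlinarith
    have hb : |b| < 1 := by
      rw [← sq_lt_one_iff_abs_lt_one]; nlinarith
    simpa [Real.norm_eq_abs] using max_lt ha hb
  have hfin : volume D < ⊤ := lt_of_le_of_lt (measure_mono hsub) measure_ball_lt_top
  set T : Set (ℝ × ℝ) := Set.Ioo (0:ℝ) 1 ×ˢ (Φ ∩ Set.Ioo (-π) π) with hTdef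
  have key : (volume D).toReal = (volume (Φ ∩ Set.Ioo (-π) π)).toReal / 2 := by
    have h1 : (volume D).toReal = ∫ p : ℝ × ℝ, D.indicator (fun _ => (1:ℝ)) p :=
      (integral_indicator_one hD).symm
    have h2 : ∫ p : ℝ × ℝ, D.indicator (fun _ => (1:ℝ)) p
        = ∫ p in polarCoord.target, p.1 • D.indicator (fun _ => (1:ℝ)) (polarCoord.symm p) :=
      (integral_comp_polarCoord_symm _).symm
    have h3 : ∫ p in polarCoord.target, p.1 • D.indicator (fun _ => (1:ℝ)) (polarCoord.symm p)
        = ∫ p : ℝ × ℝ, T.indicator (fun q => q.1) p := by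
      rw [← integral_indicator polarCoord.open_target.measurableSet]
      congr 1
      funext p
      by_cases hp : p ∈ polarCoord.target
      · have hρ : 0 < p.1 := hp.1
        have hφ : p.2 ∈ Set.Ioo (-π) π := hp.2
        rw [Set.indicator_of_mem hp]
        rw [polarCoord_symm_apply]
        have hsq : (p.1 * Real.cos p.2)^2 + (p.1 * Real.sin p.2)^2 = p.1^2 := by
          have hs := Real.sin_sq_add_cos_sq p.2
          nlinarith [hs]
        by_cases hmem : (p.1 * Real.cos p.2, p.1 * Real.sin p.2) ∈ D
        · have hφΦ : p.2 ∈ Φ := (h p.1 p.2 hρ hφ).mp hmem.1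
          have hρ1 : p.1 < 1 := by
            have := hmem.2
            simp only [Set.mem_setOf_eq, hsq] at this
            nlinarith
          rw [Set.indicator_of_mem hmem, Set.indicator_of_mem (by exact ⟨⟨hρ, hρ1⟩, hφΦ, hφ⟩)]
          simp
        · have : p ∉ T := by
            rintro ⟨⟨hρ0, hρ1⟩, hφΦ, -⟩
            apply hmem
            constructor
            · exact (h p.1 p.2 hρ hφ).mpr hφΦ
            · simp only [Set.mem_setOf_eq, hsq]
              nlinarith
          rw [Set.indicator_of_notMem hmem, Set.indicator_of_notMem this]
          simp
      · rw [Set.indicator_of_notMem hp, Set.indicator_of_notMem]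
        rintro ⟨hρ, -, hφ⟩
        exact hp ⟨hρ.1, hφ⟩
    have h4 : ∫ p : ℝ × ℝ, T.indicator (fun q => q.1) p
        = (∫ x in Set.Ioo (0:ℝ) 1, x) * (∫ y in Φ ∩ Set.Ioo (-π) π, (1:ℝ)) := by
      rw [integral_indicator (measurableSet_Ioo.prod (hΦ.inter measurableSet_Ioo)),
        Measure.volume_eq_prod]
      have := setIntegral_prod_mul (μ := volume) (ν := volume) (fun x : ℝ => x)
        (fun _ : ℝ => (1:ℝ)) (Set.Ioo (0:ℝ) 1) (Φ ∩ Set.Ioo (-π) π)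
      simpa using this
    have h5 : (∫ x in Set.Ioo (0:ℝ) 1, x) = 1/2 := by
      rw [Measure.restrict_congr_set Ioo_ae_eq_Ioc, ← intervalIntegral.integral_of_le zero_le_one]
      simp
    have h6 : (∫ y in Φ ∩ Set.Ioo (-π) π, (1:ℝ))
        = (volume (Φ ∩ Set.Ioo (-π) π)).toReal := by
      simp [setIntegral_const, measureReal_def]
    rw [h1, h2, h3, h4, h5, h6]; ring
  rw [← key, ENNReal.ofReal_toReal hfin.ne]


lemma volume_slice (k : ℕ) (W : Set (ℝ × ℝ)) (hW : MeasurableSet W)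
    (hcone : ∀ c : ℝ, 0 < c → ∀ p : ℝ × ℝ, p ∈ W ↔ c • p ∈ W) :
    volume {q : (ℝ × ℝ) × (Fin k → ℝ) |
        q.1 ∈ W ∧ q.1.1^2 + q.1.2^2 + ∑ i, q.2 i^2 < 1}
      = volume (W ∩ {p : ℝ × ℝ | p.1^2 + p.2^2 < 1})
          * ∫⁻ w : Fin k → ℝ, ENNReal.ofReal (1 - ∑ i, w i^2) := by
  set V := volume (W ∩ {p : ℝ × ℝ | p.1^2 + p.2^2 < 1}) with hV
  have hdisk : MeasurableSet {p : ℝ × ℝ | p.1^2 + p.2^2 < 1} :=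
    measurableSet_lt (by fun_prop : Continuous fun p : ℝ × ℝ => p.1^2+p.2^2).measurable
      measurable_const
  have hS : MeasurableSet {q : (ℝ × ℝ) × (Fin k → ℝ) |
      q.1 ∈ W ∧ q.1.1^2 + q.1.2^2 + ∑ i, q.2 i^2 < 1} := by
    apply MeasurableSet.inter
    · exact hW.preimage measurable_fst
    · exact measurableSet_lt
        (by fun_prop :
          Continuous fun q : (ℝ × ℝ) × (Fin k → ℝ) => q.1.1^2 + q.1.2^2 + ∑ i, q.2 i^2).measurable
        measurable_const
  rw [Measure.volume_eq_prod, Measure.prod_apply_symm hS]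
  have hslice : ∀ w : Fin k → ℝ,
      volume ((fun p : ℝ × ℝ => (p, w)) ⁻¹' {q : (ℝ × ℝ) × (Fin k → ℝ) |
        q.1 ∈ W ∧ q.1.1^2 + q.1.2^2 + ∑ i, q.2 i^2 < 1})
      = ENNReal.ofReal (1 - ∑ i, w i^2) * V := by
    intro w
    set s := ∑ i, w i^2 with hs
    have hs0 : 0 ≤ s := by positivity
    have hpre : (fun p : ℝ × ℝ => (p, w)) ⁻¹' {q : (ℝ × ℝ) × (Fin k → ℝ) |
        q.1 ∈ W ∧ q.1.1^2 + q.1.2^2 + ∑ i, q.2 i^2 < 1}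
        = {p : ℝ × ℝ | p ∈ W ∧ p.1^2 + p.2^2 < 1 - s} := by
      ext p; simp only [Set.mem_preimage, Set.mem_setOf_eq]; constructor
      · rintro ⟨h1, h2⟩; exact ⟨h1, by linarith⟩
      · rintro ⟨h1, h2⟩; exact ⟨h1, by linarith⟩
    rw [hpre]
    rcases lt_or_ge s 1 with hlt | hge
    · set r := Real.sqrt (1 - s) with hr
      have hrpos : 0 < r := Real.sqrt_pos.mpr (by linarith)
      have hr2 : r^2 = 1 - s := Real.sq_sqrt (by linarith)
      have hset : {p : ℝ × ℝ | p ∈ W ∧ p.1^2 + p.2^2 < 1 - s}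
          = r • (W ∩ {p : ℝ × ℝ | p.1^2 + p.2^2 < 1}) := by
        ext p
        rw [Set.mem_smul_set_iff_inv_smul_mem₀ hrpos.ne']
        simp only [Set.mem_setOf_eq, Set.mem_inter_iff, Prod.smul_fst, Prod.smul_snd,
          smul_eq_mul]
        constructor
        · rintro ⟨h1, h2⟩
          refine ⟨(hcone r hrpos _).mpr ?_, ?_⟩
          · rw [smul_inv_smul₀ hrpos.ne']; exact h1
          · have key : (r⁻¹)^2 * (p.1^2 + p.2^2) < (r⁻¹)^2 * r^2 :=
              mul_lt_mul_of_pos_left (by rw [hr2]; exact h2) (by positivity)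
            have hone : (r⁻¹)^2 * r^2 = 1 := by field_simp
            calc (r⁻¹ * p.1)^2 + (r⁻¹ * p.2)^2 = (r⁻¹)^2 * (p.1^2 + p.2^2) := by ring
            _ < (r⁻¹)^2 * r^2 := key
            _ = 1 := hone
        · rintro ⟨h1, h2⟩
          have h1' : p ∈ W := by
            have := (hcone r hrpos (r⁻¹ • p)).mp h1
            rwa [smul_inv_smul₀ hrpos.ne'] at this
          refine ⟨h1', ?_⟩
          have h2' : (r⁻¹)^2 * (p.1^2 + p.2^2) < 1 := by
            calc (r⁻¹)^2 * (p.1^2+p.2^2) = (r⁻¹*p.1)^2 + (r⁻¹*p.2)^2 := by ring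
            _ < 1 := h2
          have := mul_lt_mul_of_pos_left h2' (show (0:ℝ) < r^2 by positivity)
          rw [mul_one] at this
          calc p.1^2 + p.2^2 = r^2 * ((r⁻¹)^2 * (p.1^2+p.2^2)) := by
                field_simp
          _ < r^2 := this
          _ = 1 - s := hr2
      rw [hset, Measure.addHaar_smul_of_nonneg volume hrpos.le]
      have hrank : Module.finrank ℝ (ℝ × ℝ) = 2 := by
        simp [Module.finrank_prod]
      rw [hrank, hr2]
    · have hempty : {p : ℝ × ℝ | p ∈ W ∧ p.1^2 + p.2^2 < 1 - s} = ∅ := by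
        ext p; simp only [Set.mem_setOf_eq, Set.mem_empty_iff_false, iff_false, not_and]
        intro _; nlinarith [sq_nonneg p.1, sq_nonneg p.2]
      rw [hempty]
      simp [ENNReal.ofReal_eq_zero.mpr (by linarith : 1 - s ≤ 0)]
  calc ∫⁻ w, volume ((fun p : ℝ × ℝ => (p, w)) ⁻¹' _) 
      = ∫⁻ w : Fin k → ℝ, ENNReal.ofReal (1 - ∑ i, w i^2) * V := lintegral_congr hslice
    _ = ∫⁻ w : Fin k → ℝ, V * ENNReal.ofReal (1 - ∑ i, w i^2) := by
        simp_rw [mul_comm]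
    _ = V * ∫⁻ w : Fin k → ℝ, ENNReal.ofReal (1 - ∑ i, w i^2) := by
        rw [lintegral_const_mul]
        exact (by fun_prop : Continuous fun w : Fin k → ℝ => 1 - ∑ i, w i^2).measurable.ennreal_ofReal

lemma J_pos (k : ℕ) : 0 < ∫⁻ w : Fin k → ℝ, ENNReal.ofReal (1 - ∑ i, w i^2) := by
  set U : Set (Fin k → ℝ) := {w | ∑ i, w i^2 < 1/2} with hU
  have hUopen : IsOpen U := isOpen_lt (by fun_prop) continuous_const
  have hU0 : (0 : Fin k → ℝ) ∈ U := by simp [hU]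
  have hvol : 0 < volume U := hUopen.measure_pos volume ⟨0, hU0⟩
  have hb : ∀ w : Fin k → ℝ, U.indicator (fun _ => ENNReal.ofReal (1/2)) w
      ≤ ENNReal.ofReal (1 - ∑ i, w i^2) := by
    intro w
    by_cases hw : w ∈ U
    · rw [Set.indicator_of_mem hw]
      exact ENNReal.ofReal_le_ofReal (by simp only [hU, Set.mem_setOf_eq] at hw; linarith)
    · rw [Set.indicator_of_notMem hw]; exact zero_le
  calc (0:ℝ≥0∞) < ENNReal.ofReal (1/2) * volume U := by
        apply ENNReal.mul_pos (by simp) hvol.ne'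
    _ = ∫⁻ w, U.indicator (fun _ => ENNReal.ofReal (1/2)) w := by
        rw [lintegral_indicator hUopen.measurableSet]; simp [mul_comm]
    _ ≤ _ := lintegral_mono hb

lemma J_lt_top (k : ℕ) : (∫⁻ w : Fin k → ℝ, ENNReal.ofReal (1 - ∑ i, w i^2)) < ⊤ := by
  have hb : ∀ w : Fin k → ℝ, ENNReal.ofReal (1 - ∑ i, w i^2)
      ≤ (Metric.closedBall (0 : Fin k → ℝ) 1).indicator (fun _ => 1) w := by
    intro w
    by_cases hw : w ∈ Metric.closedBall (0 : Fin k → ℝ) 1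
    · rw [Set.indicator_of_mem hw]
      calc ENNReal.ofReal (1 - ∑ i, w i^2) ≤ ENNReal.ofReal 1 :=
            ENNReal.ofReal_le_ofReal (by nlinarith [Finset.sum_nonneg (fun i (_ : i ∈ Finset.univ) => sq_nonneg (w i))])
        _ = 1 := ENNReal.ofReal_one
    · rw [Set.indicator_of_notMem hw]
      rw [Metric.mem_closedBall, dist_zero_right] at hw
      push_neg at hw
      have : ∃ i, 1 < |w i| := by
        by_contra hc
        push_neg at hc
        have : ‖w‖ ≤ 1 := by
          apply pi_norm_le_iff_of_nonneg zero_le_one |>.mpr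
          intro i; simpa [Real.norm_eq_abs] using hc i
        linarith
      obtain ⟨i, hi⟩ := this
      have hsum : 1 ≤ ∑ j, w j ^2 := by
        calc (1:ℝ) ≤ w i^2 := by nlinarith [abs_nonneg (w i), sq_abs (w i)]
        _ ≤ ∑ j, w j^2 := Finset.single_le_sum (fun j _ => sq_nonneg (w j)) (Finset.mem_univ i)
      simp [ENNReal.ofReal_eq_zero.mpr (by linarith : 1 - ∑ j, w j^2 ≤ 0)]
  calc (∫⁻ w : Fin k → ℝ, ENNReal.ofReal (1 - ∑ i, w i^2))
      ≤ ∫⁻ w, (Metric.closedBall (0 : Fin k → ℝ) 1).indicator (fun _ => 1) w :=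
        lintegral_mono hb
    _ = volume (Metric.closedBall (0 : Fin k → ℝ) 1) := by
        rw [lintegral_indicator measurableSet_closedBall]; simp
    _ < ⊤ := measure_closedBall_lt_top


noncomputable def Wset (α : ℝ) : Set (ℝ × ℝ) :=
  {p | sgn (Real.cos α * p.1 - Real.sin α * p.2) ≠ sgn (Real.cos α * p.1 + Real.sin α * p.2)}

lemma measurable_Wset (α : ℝ) : MeasurableSet (Wset α) := by
  have h1 : Measurable fun p : ℝ × ℝ => sgn (Real.cos α * p.1 - Real.sin α * p.2) :=
    measurable_sgn.comp (by fun_prop)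
  have h2 : Measurable fun p : ℝ × ℝ => sgn (Real.cos α * p.1 + Real.sin α * p.2) :=
    measurable_sgn.comp (by fun_prop)
  exact (measurableSet_eq_fun h1 h2).compl

lemma Wset_cone (α : ℝ) : ∀ c : ℝ, 0 < c → ∀ p : ℝ × ℝ, p ∈ Wset α ↔ c • p ∈ Wset α := by
  intro c hc p
  simp only [Wset, Set.mem_setOf_eq, Prod.smul_fst, Prod.smul_snd, smul_eq_mul]
  have e1 : Real.cos α * (c * p.1) - Real.sin α * (c * p.2)
      = c * (Real.cos α * p.1 - Real.sin α * p.2) := by ring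
  have e2 : Real.cos α * (c * p.1) + Real.sin α * (c * p.2)
      = c * (Real.cos α * p.1 + Real.sin α * p.2) := by ring
  rw [e1, e2, sgn_mul_pos hc, sgn_mul_pos hc]

lemma mem_Wset_polar {α : ℝ} (hα : 0 < α) (hα' : α < π/2) :
    ∀ ρ φ : ℝ, 0 < ρ → φ ∈ Set.Ioo (-π) π →
      ((ρ * Real.cos φ, ρ * Real.sin φ) ∈ Wset α ↔
        φ ∈ Set.Ioc (-(π/2) - α) (-(π/2) + α) ∪ Set.Ico (π/2 - α) (π/2 + α)) := by
  intro ρ φ hρ hφ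
  have e1 : Real.cos α * (ρ * Real.cos φ) - Real.sin α * (ρ * Real.sin φ)
      = ρ * Real.cos (φ + α) := by rw [Real.cos_add]; ring
  have e2 : Real.cos α * (ρ * Real.cos φ) + Real.sin α * (ρ * Real.sin φ)
      = ρ * Real.cos (φ - α) := by rw [Real.cos_sub]; ring
  have habs : |α| < π/2 := by rw [abs_of_pos hα]; exact hα'
  have hA : 0 < Real.cos (φ + α) ↔ (-(π/2) - α < φ ∧ φ < π/2 - α) :=
    cos_add_pos_iff habs hφ.1 hφ.2
  have hB : 0 < Real.cos (φ - α) ↔ (-(π/2) + α < φ ∧ φ < π/2 + α) := by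
    rw [sub_eq_add_neg, cos_add_pos_iff (by rwa [abs_neg]) hφ.1 hφ.2]
    constructor <;> rintro ⟨h1, h2⟩ <;> exact ⟨by linarith, by linarith⟩
  simp only [Wset, Set.mem_setOf_eq]
  rw [e1, e2, sgn_mul_pos hρ, sgn_mul_pos hρ, sgn_ne_iff, hA, hB]
  simp only [Set.mem_union, Set.mem_Ioc, Set.mem_Ico]
  constructor
  · intro h
    rw [iff_iff_implies_and_implies, not_and_or] at h
    rcases h with h | h
    · push_neg at h
      obtain ⟨⟨ha1, ha2⟩, hcon⟩ := h
      by_cases h3 : -(π/2) + α < φ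
      · exfalso; have := hcon h3; linarith
      · push_neg at h3; exact Or.inl ⟨ha1, h3⟩
    · push_neg at h
      obtain ⟨⟨hb1, hb2⟩, hcon⟩ := h
      have h3 : π/2 - α ≤ φ := hcon (by linarith)
      exact Or.inr ⟨h3, hb2⟩
  · rintro (⟨ha, hb⟩ | ⟨ha, hb⟩) <;> rw [iff_iff_implies_and_implies]
    · rintro ⟨f1, -⟩
      have hP : -(π/2) - α < φ ∧ φ < π/2 - α := ⟨ha, by linarith⟩
      have := (f1 hP).1; linarith
    · rintro ⟨-, f2⟩
      have hQ : -(π/2) + α < φ ∧ φ < π/2 + α := ⟨by linarith, hb⟩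
      have := (f2 hQ).2; linarith

lemma volume_Wset_disk {α : ℝ} (hα : 0 < α) (hα' : α < π/2) :
    volume (Wset α ∩ {p : ℝ × ℝ | p.1^2 + p.2^2 < 1}) = ENNReal.ofReal (2*α) := by
  set Φ := Set.Ioc (-(π/2) - α) (-(π/2) + α) ∪ Set.Ico (π/2 - α) (π/2 + α) with hΦdef
  have hΦm : MeasurableSet Φ := measurableSet_Ioc.union measurableSet_Ico
  rw [area_polar _ (measurable_Wset α) Φ hΦm (mem_Wset_polar hα hα')]
  have hpi := Real.pi_pos
  have hsub : Φ ⊆ Set.Ioo (-π) π := by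
    rintro x (⟨h1, h2⟩ | ⟨h1, h2⟩) <;> exact Set.mem_Ioo.mpr ⟨by linarith, by linarith⟩
  rw [Set.inter_eq_left.mpr hsub]
  have hdisj : Disjoint (Set.Ioc (-(π/2) - α) (-(π/2) + α)) (Set.Ico (π/2 - α) (π/2 + α)) := by
    rw [Set.disjoint_left]
    rintro x ⟨-, h2⟩ ⟨h3, -⟩; linarith
  rw [hΦdef, measure_union hdisj measurableSet_Ico, Real.volume_Ioc, Real.volume_Ico,
    ← ENNReal.ofReal_add (by linarith) (by linarith)]
  rw [show (-(π/2) + α - (-(π/2) - α)) + (π/2 + α - (π/2 - α)) = 4*α by ring]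
  rw [ENNReal.toReal_ofReal (by linarith)]
  congr 1
  ring

lemma volume_disk : volume {p : ℝ × ℝ | p.1^2 + p.2^2 < 1} = ENNReal.ofReal π := by
  have := area_polar Set.univ MeasurableSet.univ Set.univ MeasurableSet.univ
    (by intro ρ φ _ _; simp)
  rw [Set.univ_inter, Set.univ_inter] at this
  rw [this, Real.volume_Ioo, ENNReal.toReal_ofReal (by linarith [Real.pi_pos])]
  congr 1
  ring

lemma uniformSphere_apply (d : ℕ) (C : Set (EuclideanSpace ℝ (Fin d))) (hC : MeasurableSet C)
    (hcone : ∀ c : ℝ, 0 < c → ∀ x, x ∈ C ↔ c • x ∈ C)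
    (h0 : (0 : EuclideanSpace ℝ (Fin d)) ∉ C) :
    uniformSphere d
        {x : Metric.sphere (0 : EuclideanSpace ℝ (Fin d)) 1 |
          (x : EuclideanSpace ℝ (Fin d)) ∈ C}
      = ((d : ℝ≥0∞) * volume (Metric.ball (0 : EuclideanSpace ℝ (Fin d)) 1))⁻¹
        * ((d : ℝ≥0∞) * volume (C ∩ Metric.ball 0 1)) := by
  set S : Set (Metric.sphere (0 : EuclideanSpace ℝ (Fin d)) 1) := {x | (x : EuclideanSpace ℝ (Fin d)) ∈ C} with hSdef
  have hS : MeasurableSet S := hC.preimage continuous_subtype_val.measurable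
  have hsmul : Set.Ioo (0:ℝ) 1 • (Subtype.val '' S) = C ∩ Metric.ball 0 1 := by
    ext z
    constructor
    · intro hz
      obtain ⟨t, ht, x, hx, rfl⟩ := Set.mem_smul.mp hz
      obtain ⟨xs, hxs, rfl⟩ := hx
      have hx1 : ‖(xs : EuclideanSpace ℝ (Fin d))‖ = 1 := by
        have := xs.2
        rwa [mem_sphere_zero_iff_norm] at this
      refine ⟨(hcone t ht.1 _).mp hxs, ?_⟩
      rw [mem_ball_zero_iff, norm_smul, Real.norm_eq_abs, abs_of_pos ht.1, hx1, mul_one]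
      exact ht.2
    · rintro ⟨hzC, hzb⟩
      have hz0 : z ≠ 0 := fun h => h0 (h ▸ hzC)
      have ht : 0 < ‖z‖ := norm_pos_iff.mpr hz0
      have hx1 : ‖‖z‖⁻¹ • z‖ = 1 := norm_smul_inv_norm hz0
      refine Set.mem_smul.mpr ⟨‖z‖, ⟨ht, by rwa [mem_ball_zero_iff] at hzb⟩,
        ‖z‖⁻¹ • z, ⟨⟨‖z‖⁻¹ • z, mem_sphere_zero_iff_norm.mpr hx1⟩,
          (hcone ‖z‖⁻¹ (inv_pos.mpr ht) z).mp hzC, rfl⟩, smul_inv_smul₀ ht.ne' z⟩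
  have hrank : Module.finrank ℝ (EuclideanSpace ℝ (Fin d)) = d := finrank_euclideanSpace_fin
  show ((volume : Measure (EuclideanSpace ℝ (Fin d))).toSphere Set.univ)⁻¹ • (volume : Measure (EuclideanSpace ℝ (Fin d))).toSphere S = _
  rw [smul_eq_mul, Measure.toSphere_apply' _ hS,
    Measure.toSphere_apply_univ, hrank, hsmul]

lemma slice_meas (k : ℕ) (W : Set (ℝ × ℝ)) (hW : MeasurableSet W) :
    MeasurableSet {q : (ℝ × ℝ) × (Fin k → ℝ) |
      q.1 ∈ W ∧ q.1.1^2 + q.1.2^2 + ∑ i, q.2 i^2 < 1} := by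
  apply MeasurableSet.inter
  · exact hW.preimage measurable_fst
  · exact measurableSet_lt
      (by fun_prop :
        Continuous fun q : (ℝ × ℝ) × (Fin k → ℝ) => q.1.1^2 + q.1.2^2 + ∑ i, q.2 i^2).measurable
      measurable_const

end Aux

set_option maxHeartbeats 2000000 in
open Real Set Pointwise in
open scoped ENNReal in
/-- Hyperplane rounding: the probability that `sign (u ⬝ x) ≠ sign (v ⬝ x)` for a uniformly
random unit vector `x` equals `θ/π`, where `θ` is the angle between `u` and `v`. -/
theorem sign_disagreement_prob (d : ℕ) (hd : 2 ≤ d)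
    (u v : EuclideanSpace ℝ (Fin d)) (hu : u ≠ 0) (hv : v ≠ 0) :
    uniformSphere d
      {x | sgn (inner ℝ u (x : EuclideanSpace ℝ (Fin d))) ≠
            sgn (inner ℝ v (x : EuclideanSpace ℝ (Fin d)))}
      = ENNReal.ofReal (angle u v / Real.pi) := by
  obtain ⟨k, rfl⟩ : ∃ k, d = k + 2 := ⟨d - 2, by omega⟩
  set C : Set (EuclideanSpace ℝ (Fin (k+2))) :=
    {x | sgn (inner ℝ u x) ≠ sgn (inner ℝ v x)} with hCdef
  have hCm : MeasurableSet C := by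
    have h1 : Measurable fun x : EuclideanSpace ℝ (Fin (k+2)) => sgn (inner ℝ u x : ℝ) :=
      measurable_sgn.comp (Continuous.measurable (continuous_const.inner continuous_id))
    have h2 : Measurable fun x : EuclideanSpace ℝ (Fin (k+2)) => sgn (inner ℝ v x : ℝ) :=
      measurable_sgn.comp (Continuous.measurable (continuous_const.inner continuous_id))
    exact (measurableSet_eq_fun h1 h2).compl
  have hcone : ∀ c : ℝ, 0 < c → ∀ x, x ∈ C ↔ c • x ∈ C := by
    intro c hc x
    simp only [hCdef, Set.mem_setOf_eq]
    rw [real_inner_smul_right, real_inner_smul_right, sgn_mul_pos hc, sgn_mul_pos hc]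
  have h0C : (0 : EuclideanSpace ℝ (Fin (k+2))) ∉ C := by
    simp [hCdef, inner_zero_right]
  have hkey := uniformSphere_apply (k+2) C hCm hcone h0C
  have hsetid : {x : Metric.sphere (0 : EuclideanSpace ℝ (Fin (k+2))) 1 |
      sgn (inner ℝ u (x : EuclideanSpace ℝ (Fin (k+2)))) ≠
        sgn (inner ℝ v (x : EuclideanSpace ℝ (Fin (k+2))))}
      = {x : Metric.sphere (0 : EuclideanSpace ℝ (Fin (k+2))) 1 |
          (x : EuclideanSpace ℝ (Fin (k+2))) ∈ C} := rfl
  rw [hsetid, hkey]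
  have hballpos : (0:ℝ≥0∞) < volume (Metric.ball (0 : EuclideanSpace ℝ (Fin (k+2))) 1) :=
    Metric.measure_ball_pos volume _ one_pos
  have hballfin : volume (Metric.ball (0 : EuclideanSpace ℝ (Fin (k+2))) 1) < ⊤ :=
    measure_ball_lt_top
  have hdne : ((k+2 : ℕ) : ℝ≥0∞) ≠ 0 := by simp
  have hθ0 := angle_nonneg u v
  have hθπ := angle_le_pi u v
  by_cases hzero : angle u v = 0
  · obtain ⟨-, r, hr, rfl⟩ := angle_eq_zero_iff.mp hzero
    have hCempty : C = ∅ := by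
      ext x
      simp only [hCdef, Set.mem_setOf_eq, Set.mem_empty_iff_false, iff_false, not_not,
        Decidable.not_not]
      rw [real_inner_smul_left, sgn_mul_pos hr]
    rw [hCempty]
    simp [hzero]
  by_cases hpi : angle u v = π
  · obtain ⟨-, r, hr, rfl⟩ := angle_eq_pi_iff.mp hpi
    have hCeq : C ∩ Metric.ball 0 1
        = Metric.ball (0 : EuclideanSpace ℝ (Fin (k+2))) 1 \
            {x | (inner ℝ u x : ℝ) = 0} := by
      have hsgnneg : ∀ t : ℝ, (sgn t ≠ sgn (r * t)) ↔ t ≠ 0 := by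
        intro t
        rcases lt_trichotomy t 0 with h | h | h
        · have h1 : ¬ (0 < t) := by linarith
          have h2 : 0 < r * t := mul_pos_of_neg_of_neg hr h
          simp [sgn, h1, h2, h.ne]
        · subst h; simp [sgn]
        · have h2 : ¬ (0 < r * t) := by nlinarith
          simp [sgn, h, h2, h.ne']
      ext x
      simp only [hCdef, Set.mem_inter_iff, Set.mem_setOf_eq, Set.mem_diff]
      rw [real_inner_smul_left, hsgnneg]
      tauto
    have hnull : volume {x : EuclideanSpace ℝ (Fin (k+2)) | (inner ℝ u x : ℝ) = 0} = 0 := by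
      have hker : {x : EuclideanSpace ℝ (Fin (k+2)) | (inner ℝ u x : ℝ) = 0}
          = (LinearMap.ker (innerSL ℝ u : EuclideanSpace ℝ (Fin (k+2)) →ₗ[ℝ] ℝ) : Set (EuclideanSpace ℝ (Fin (k+2)))) := by
        ext x; simp [LinearMap.mem_ker]
      rw [hker]
      apply Measure.addHaar_submodule
      intro htop
      apply hu
      have humem : u ∈ LinearMap.ker (innerSL ℝ u : EuclideanSpace ℝ (Fin (k+2)) →ₗ[ℝ] ℝ) := by rw [htop]; trivial
      have : (inner ℝ u u : ℝ) = 0 := humem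
      exact inner_self_eq_zero.mp this
    rw [hCeq, measure_diff_null hnull, hpi, div_self Real.pi_ne_zero, ENNReal.ofReal_one]
    exact ENNReal.inv_mul_cancel (mul_ne_zero hdne hballpos.ne')
      (ENNReal.mul_ne_top (ENNReal.natCast_ne_top _) hballfin.ne)
  -- main case : 0 < angle < π
  have hθpos : 0 < angle u v := lt_of_le_of_ne hθ0 (Ne.symm hzero)
  have hθlt : angle u v < π := lt_of_le_of_ne hθπ hpi
  have hpip := Real.pi_pos
  set α := angle u v / 2 with hαdef
  have hα : 0 < α := by positivity
  have hα' : α < π/2 := by rw [hαdef]; linarith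
  have hcosα : 0 < Real.cos α := Real.cos_pos_of_mem_Ioo ⟨by linarith, hα'⟩
  have hsinα : 0 < Real.sin α := Real.sin_pos_of_pos_of_lt_pi hα (by linarith)
  have hu0 : (0:ℝ) < ‖u‖ := norm_pos_iff.mpr hu
  have hv0 : (0:ℝ) < ‖v‖ := norm_pos_iff.mpr hv
  set w1 : EuclideanSpace ℝ (Fin (k+2)) := ‖u‖⁻¹ • u with hw1def
  set w2 : EuclideanSpace ℝ (Fin (k+2)) := ‖v‖⁻¹ • v with hw2def
  have hw1 : (inner ℝ w1 w1 : ℝ) = 1 := by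
    rw [hw1def, real_inner_smul_left, real_inner_smul_right, real_inner_self_eq_norm_sq]
    field_simp
  have hw2 : (inner ℝ w2 w2 : ℝ) = 1 := by
    rw [hw2def, real_inner_smul_left, real_inner_smul_right, real_inner_self_eq_norm_sq]
    field_simp
  have hw12 : (inner ℝ w1 w2 : ℝ) = Real.cos (angle u v) := by
    rw [cos_angle, hw1def, hw2def, real_inner_smul_left, real_inner_smul_right]
    field_simp
  have h2αeq : 2 * α = angle u v := by rw [hαdef]; ring
  have hcos2 : 1 + Real.cos (angle u v) = 2 * Real.cos α ^ 2 := by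
    have h := Real.cos_sq α
    rw [h2αeq] at h
    linarith
  have hsin2 : 1 - Real.cos (angle u v) = 2 * Real.sin α ^ 2 := by
    have h := Real.sin_sq α
    linarith [hcos2]
  set e1 : EuclideanSpace ℝ (Fin (k+2)) := (2 * Real.cos α)⁻¹ • (w1 + w2) with he1def
  set e2 : EuclideanSpace ℝ (Fin (k+2)) := (2 * Real.sin α)⁻¹ • (w2 - w1) with he2def
  have hip_e1 : (inner ℝ e1 e1 : ℝ) = 1 := by
    rw [he1def, real_inner_smul_left, real_inner_smul_right, real_inner_add_add_self,
      hw1, hw2, hw12]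
    have h4 : 1 + 2 * Real.cos (angle u v) + 1 = (2 * Real.cos α)^2 := by nlinarith [hcos2]
    rw [h4]; field_simp
  have hip_e2 : (inner ℝ e2 e2 : ℝ) = 1 := by
    rw [he2def, real_inner_smul_left, real_inner_smul_right, real_inner_sub_sub_self,
      hw1, hw2, real_inner_comm w1 w2, hw12]
    have h4 : 1 - 2 * Real.cos (angle u v) + 1 = (2 * Real.sin α)^2 := by nlinarith [hsin2]
    rw [h4]; field_simp
  have hip_e12 : (inner ℝ e1 e2 : ℝ) = 0 := by
    rw [he1def, he2def, real_inner_smul_left, real_inner_smul_right]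
    have : (inner ℝ (w1 + w2) (w2 - w1) : ℝ) = 0 := by
      rw [inner_sub_right, inner_add_left, inner_add_left, real_inner_comm w1 w2, hw1, hw2, hw12]
      ring
    rw [this]; ring
  have hip_e21 : (inner ℝ e2 e1 : ℝ) = 0 := by rw [real_inner_comm, hip_e12]
  set i1 : Fin (k+2) := ⟨1, by omega⟩ with hi1def
  have hi10 : i1 ≠ 0 := by simp [hi1def, Fin.ext_iff]
  set f : Fin (k+2) → EuclideanSpace ℝ (Fin (k+2)) := fun i => if i = 0 then e1 else e2
    with hfdef
  have hon : Orthonormal ℝ (Set.restrict {0, i1} f) := by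
    rw [orthonormal_iff_ite]
    rintro ⟨i, hi⟩ ⟨j, hj⟩
    simp only [Set.mem_insert_iff, Set.mem_singleton_iff] at hi hj
    have hf0 : f 0 = e1 := if_pos rfl
    have hfi1 : f i1 = e2 := if_neg hi10
    rcases hi with rfl | rfl <;> rcases hj with rfl | rfl
    · rw [if_pos rfl]
      show (inner ℝ (f 0) (f 0) : ℝ) = 1
      rw [hf0]; exact hip_e1
    · rw [if_neg (fun h => hi10 (congrArg Subtype.val h).symm)]
      show (inner ℝ (f 0) (f i1) : ℝ) = 0
      rw [hf0, hfi1]; exact hip_e12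
    · rw [if_neg (fun h => hi10 (congrArg Subtype.val h))]
      show (inner ℝ (f i1) (f 0) : ℝ) = 0
      rw [hf0, hfi1]; exact hip_e21
    · rw [if_pos rfl]
      show (inner ℝ (f i1) (f i1) : ℝ) = 1
      rw [hfi1]; exact hip_e2
  have hcard : Module.finrank ℝ (EuclideanSpace ℝ (Fin (k+2))) = Fintype.card (Fin (k+2)) := by
    simp
  obtain ⟨b, hb⟩ := hon.exists_orthonormalBasis_extension_of_card_eq hcard
  have hf0' : f 0 = e1 := if_pos rfl
  have hfi1' : f i1 = e2 := if_neg hi10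
  have hb0 : b 0 = e1 := (hb 0 (Or.inl rfl)).trans hf0'
  have hbi1 : b i1 = e2 := (hb i1 (Or.inr rfl)).trans hfi1'
  have hrepr : ∀ (x : EuclideanSpace ℝ (Fin (k+2))) (i : Fin (k+2)),
      b.repr x i = (inner ℝ (b i) x : ℝ) := fun x i => b.repr_apply_apply x i
  have hw1e : Real.cos α • e1 - Real.sin α • e2 = w1 := by
    rw [he1def, he2def]
    match_scalars <;> field_simp <;> ring
  have hw2e : Real.cos α • e1 + Real.sin α • e2 = w2 := by
    rw [he1def, he2def]
    match_scalars <;> field_simp <;> ring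
  have hu' : u = ‖u‖ • w1 := by rw [hw1def, smul_inv_smul₀ hu0.ne']
  have hv' : v = ‖v‖ • w2 := by rw [hw2def, smul_inv_smul₀ hv0.ne']
  clear_value w1 w2 e1 e2
  have hiu : ∀ x : EuclideanSpace ℝ (Fin (k+2)),
      (inner ℝ u x : ℝ) = ‖u‖ * (Real.cos α * b.repr x 0 - Real.sin α * b.repr x i1) := by
    intro x
    conv_lhs => rw [hu', ← hw1e]
    rw [real_inner_smul_left, inner_sub_left, real_inner_smul_left, real_inner_smul_left,
      hrepr x 0, hrepr x i1, hb0, hbi1]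
  have hiv : ∀ x : EuclideanSpace ℝ (Fin (k+2)),
      (inner ℝ v x : ℝ) = ‖v‖ * (Real.cos α * b.repr x 0 + Real.sin α * b.repr x i1) := by
    intro x
    conv_lhs => rw [hv', ← hw2e]
    rw [real_inner_smul_left, inner_add_left, real_inner_smul_left, real_inner_smul_left,
      hrepr x 0, hrepr x i1, hb0, hbi1]
  set Ψ : EuclideanSpace ℝ (Fin (k+2)) → (ℝ × ℝ) × (Fin k → ℝ) :=
    fun x => ((b.repr x 0, b.repr x i1), fun i => b.repr x ⟨i.1+2, by omega⟩) with hΨdef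
  have hΨmp : MeasurePreserving Ψ volume volume := by
    have hT := b.measurePreserving_repr
    have hE := EuclideanSpace.volume_preserving_symm_measurableEquiv_toLp (Fin (k+2))
    have h1 := MeasureTheory.volume_preserving_piFinSuccAbove (fun _ : Fin (k+2) => ℝ) 0
    have h2' := MeasureTheory.volume_preserving_piFinSuccAbove (fun _ : Fin (k+1) => ℝ) 0
    have h2 : MeasurePreserving (Prod.map (id : ℝ → ℝ)
        (MeasurableEquiv.piFinSuccAbove (fun _ : Fin (k+1) => ℝ) 0)) volume volume := by
      have := (MeasurePreserving.id (volume : Measure ℝ)).prod h2'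
      simpa [← Measure.volume_eq_prod] using this
    have hassoc := MeasurePreserving.symm
      (MeasurableEquiv.prodAssoc : (ℝ × ℝ) × (Fin k → ℝ) ≃ᵐ ℝ × ℝ × (Fin k → ℝ))
      (measurePreserving_prodAssoc (volume : Measure ℝ) (volume : Measure ℝ)
        (volume : Measure (Fin k → ℝ)))
    have hassoc' : MeasurePreserving
        (MeasurableEquiv.prodAssoc.symm : ℝ × ℝ × (Fin k → ℝ) ≃ᵐ (ℝ × ℝ) × (Fin k → ℝ))
        volume volume := by
      simpa [← Measure.volume_eq_prod] using hassoc
    have hcomp := ((hassoc'.comp h2).comp h1).comp (hE.comp hT)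
    have heq : Ψ = (⇑(MeasurableEquiv.prodAssoc.symm :
          ℝ × ℝ × (Fin k → ℝ) ≃ᵐ (ℝ × ℝ) × (Fin k → ℝ))
        ∘ Prod.map (id : ℝ → ℝ) ⇑(MeasurableEquiv.piFinSuccAbove (fun _ : Fin (k+1) => ℝ) 0)
        ∘ ⇑(MeasurableEquiv.piFinSuccAbove (fun _ : Fin (k+2) => ℝ) 0)
        ∘ (⇑(MeasurableEquiv.toLp 2 (Fin (k+2) → ℝ)).symm ∘ ⇑b.repr)) := by
      funext x; rfl
    rw [heq]
    exact hcomp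
  have hsum : ∀ x : EuclideanSpace ℝ (Fin (k+2)),
      ∑ i, (b.repr x i)^2
        = (b.repr x 0)^2 + (b.repr x i1)^2
          + ∑ i : Fin k, (b.repr x ⟨i.1+2, by omega⟩)^2 := by
    intro x
    rw [Fin.sum_univ_succ, Fin.sum_univ_succ]
    have h01 : Fin.succ (0 : Fin (k+1)) = i1 := by simp [hi1def, Fin.ext_iff]
    have h02 : ∀ i : Fin k, Fin.succ (Fin.succ i) = (⟨i.1+2, by omega⟩ : Fin (k+2)) := by
      intro i; simp [Fin.ext_iff]
    rw [h01, Finset.sum_congr rfl fun i _ => by rw [h02 i]]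
    ring
  have hnorm : ∀ x : EuclideanSpace ℝ (Fin (k+2)),
      (‖x‖ < 1 ↔ ∑ i, (b.repr x i)^2 < 1) := by
    intro x
    have h1 : ‖x‖^2 = ∑ i, (b.repr x i)^2 := by
      rw [← b.repr.norm_map x, EuclideanSpace.norm_eq, Real.sq_sqrt (by positivity)]
      simp [sq_abs]
    constructor <;> intro h
    · nlinarith [norm_nonneg x, h1]
    · nlinarith [norm_nonneg x, h1]
  have hcondiff : ∀ x : EuclideanSpace ℝ (Fin (k+2)),
      (x ∈ C) ↔ ((b.repr x 0, b.repr x i1) ∈ Wset α) := by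
    intro x
    simp only [hCdef, Set.mem_setOf_eq, Wset]
    rw [hiu x, hiv x, sgn_mul_pos hu0, sgn_mul_pos hv0]
  have hS1m := slice_meas k (Wset α) (measurable_Wset α)
  have hS2m := slice_meas k Set.univ MeasurableSet.univ
  have hpre1 : Ψ ⁻¹' {q : (ℝ × ℝ) × (Fin k → ℝ) |
      q.1 ∈ Wset α ∧ q.1.1^2 + q.1.2^2 + ∑ i, q.2 i^2 < 1} = C ∩ Metric.ball 0 1 := by
    ext x
    simp only [Set.mem_preimage, hΨdef, Set.mem_setOf_eq, Set.mem_inter_iff, mem_ball_zero_iff]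
    constructor
    · rintro ⟨h1, h2⟩
      exact ⟨(hcondiff x).mpr h1, (hnorm x).mpr (by rw [hsum x]; linarith)⟩
    · rintro ⟨h1, h2⟩
      refine ⟨(hcondiff x).mp h1, ?_⟩
      have := (hnorm x).mp h2
      rw [hsum x] at this
      linarith
  have hpre2 : Ψ ⁻¹' {q : (ℝ × ℝ) × (Fin k → ℝ) |
      q.1 ∈ (Set.univ : Set (ℝ × ℝ)) ∧ q.1.1^2 + q.1.2^2 + ∑ i, q.2 i^2 < 1}
      = Metric.ball 0 1 := by
    ext x
    simp only [Set.mem_preimage, hΨdef, Set.mem_setOf_eq, Set.mem_univ, true_and,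
      mem_ball_zero_iff]
    constructor
    · intro h2
      exact (hnorm x).mpr (by rw [hsum x]; linarith)
    · intro h2
      have := (hnorm x).mp h2
      rw [hsum x] at this
      linarith
  have hvol1 : volume (C ∩ Metric.ball 0 1)
      = ENNReal.ofReal (2*α) * ∫⁻ w : Fin k → ℝ, ENNReal.ofReal (1 - ∑ i, w i^2) := by
    rw [← hpre1, hΨmp.measure_preimage hS1m.nullMeasurableSet,
      volume_slice k (Wset α) (measurable_Wset α) (Wset_cone α), volume_Wset_disk hα hα']
  have hvol2 : volume (Metric.ball (0 : EuclideanSpace ℝ (Fin (k+2))) 1)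
      = ENNReal.ofReal π * ∫⁻ w : Fin k → ℝ, ENNReal.ofReal (1 - ∑ i, w i^2) := by
    rw [← hpre2, hΨmp.measure_preimage hS2m.nullMeasurableSet,
      volume_slice k Set.univ MeasurableSet.univ (by intro c hc p; simp),
      Set.univ_inter, volume_disk]
  rw [hvol1, hvol2]
  set J := ∫⁻ w : Fin k → ℝ, ENNReal.ofReal (1 - ∑ i, w i^2) with hJdef
  have hJ0 : J ≠ 0 := (J_pos k).ne'
  have hJt : J ≠ ⊤ := (J_lt_top k).ne
  rw [h2αeq]
  have hofθ : ENNReal.ofReal (angle u v)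
      = ENNReal.ofReal (angle u v / π) * ENNReal.ofReal π := by
    rw [← ENNReal.ofReal_mul (div_nonneg hθpos.le hpip.le), div_mul_cancel₀ _ Real.pi_ne_zero]
  rw [hofθ]
  have hA0 : ((k+2 : ℕ) : ℝ≥0∞) * (ENNReal.ofReal π * J) ≠ 0 :=
    mul_ne_zero hdne (mul_ne_zero (by simp [hpip]) hJ0)
  have hAt : ((k+2 : ℕ) : ℝ≥0∞) * (ENNReal.ofReal π * J) ≠ ⊤ :=
    ENNReal.mul_ne_top (ENNReal.natCast_ne_top _) (ENNReal.mul_ne_top ENNReal.ofReal_ne_top hJt)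
  have hrearr : ((k+2 : ℕ) : ℝ≥0∞) * (ENNReal.ofReal (angle u v / π) * ENNReal.ofReal π * J)
      = ENNReal.ofReal (angle u v / π) * (((k+2 : ℕ) : ℝ≥0∞) * (ENNReal.ofReal π * J)) := by
    ring
  rw [hrearr, mul_comm (ENNReal.ofReal (angle u v / π)), ← mul_assoc,
    ENNReal.inv_mul_cancel hA0 hAt, one_mul]
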